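/- For every r < ω and every infinite cardinal μ, the partition relation ℶ_r(μ)^+ → (μ^+)^{r+1}_μ holds: every coloring of (r+1)-element subsets of a set of cardinality ℶ_r(μ)^+ with μ colors has a homogeneous set of cardinality μ^+. -/

import Mathlib

open Cardinal Set Order

/-- The iterated beth operation: `iterBeth μ 0 = μ`, `iterBeth μ (r+1) = 2 ^ iterBeth μ r`. -/
def iterBeth (μ : Cardinal) : ℕ → Cardinal
  | 0 => μ
  | r + 1 => 2 ^ iterBeth μ r

namespace ERaux

universe u

local instance (priority := high) wfrel {Ω : Type u} [LT Ω] [WellFoundedLT Ω] :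
    WellFoundedRelation Ω := WellFoundedLT.toWellFoundedRelation

variable {α ι L : Type u} [DecidableEq α]

/-- `b` realizes the "type" `τ` over `Set.range f`. -/
def Realizes (c : Finset α → ι) (f : L → α) (τ : Finset L → ι) (b : α) : Prop :=
  b ∉ Set.range f ∧ ∀ σ : Finset L, c (insert b (σ.image f)) = τ σ

open Classical in
noncomputable def witSet (c : Finset α → ι) (f : L → α) (τ : Finset L → ι) : Set α :=
  if h : ∃ b, Realizes c f τ b then {h.choose} else ∅

lemma mk_witSet_le (c : Finset α → ι) (f : L → α) (τ : Finset L → ι) :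
    #(witSet c f τ) ≤ 1 := by
  unfold witSet
  split
  · simp
  · simp

lemma witSet_spec (c : Finset α → ι) (f : L → α) (τ : Finset L → ι)
    (h : ∃ b, Realizes c f τ b) : ∃ b ∈ witSet c f τ, Realizes c f τ b := by
  rw [witSet, dif_pos h]
  exact ⟨h.choose, rfl, h.choose_spec⟩

noncomputable def oneStep (L : Type u) (c : Finset α → ι) (D : Set α) : Set α :=
  D ∪ ⋃ p : (L → D) × (Finset L → ι), witSet c (fun l => ((p.1 l : α))) p.2

lemma subset_oneStep (L : Type u) (c : Finset α → ι) (D : Set α) : D ⊆ oneStep L c D :=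
  Set.subset_union_left

noncomputable def chain (L : Type u) (c : Finset α → ι) (a₀ : α)
    {Ω : Type u} [LinearOrder Ω] [WellFoundedLT Ω] (ξ : Ω) : Set α :=
  oneStep L c ({a₀} ∪ ⋃ η : Set.Iio ξ, chain L c a₀ η.1)
termination_by ξ
decreasing_by exact η.2

lemma chain_eq (L : Type u) (c : Finset α → ι) (a₀ : α)
    {Ω : Type u} [LinearOrder Ω] [WellFoundedLT Ω] (ξ : Ω) :
    chain L c a₀ ξ = oneStep L c ({a₀} ∪ ⋃ η : Set.Iio ξ, chain L c a₀ η.1) := by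
  rw [chain]

open Classical in
noncomputable def pick (c : Finset α → ι) (B : Set α) (a' : α) (X : Set α) : α :=
  if h : ∃ b, b ∈ B ∧ b ∉ X ∧ ∀ s : Finset α, ↑s ⊆ X →
      c (insert b s) = c (insert a' s) then h.choose else a'

lemma pick_spec (c : Finset α → ι) (B : Set α) (a' : α) (X : Set α)
    (h : ∃ b, b ∈ B ∧ b ∉ X ∧ ∀ s : Finset α, ↑s ⊆ X →
      c (insert b s) = c (insert a' s)) :
    pick c B a' X ∈ B ∧ pick c B a' X ∉ X ∧ ∀ s : Finset α, ↑s ⊆ X →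
      c (insert (pick c B a' X) s) = c (insert a' s) := by
  rw [pick, dif_pos h]
  exact h.choose_spec

noncomputable def seq (c : Finset α → ι) (B : Set α) (a' : α)
    {Ω : Type u} [LinearOrder Ω] [WellFoundedLT Ω] (ξ : Ω) : α :=
  pick c B a' (⋃ η : Set.Iio ξ, {seq c B a' η.1})
termination_by ξ
decreasing_by exact η.2

lemma seq_eq (c : Finset α → ι) (B : Set α) (a' : α)
    {Ω : Type u} [LinearOrder Ω] [WellFoundedLT Ω] (ξ : Ω) :
    seq c B a' ξ = pick c B a' (seq c B a' '' Set.Iio ξ) := by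
  rw [seq]
  congr 1
  ext a
  simp only [Set.mem_iUnion, Set.mem_singleton_iff, Set.mem_image, Set.mem_Iio]
  constructor
  · rintro ⟨η, rfl⟩; exact ⟨η.1, η.2, rfl⟩
  · rintro ⟨η, h, rfl⟩; exact ⟨⟨η, h⟩, rfl⟩

lemma exists_range_eq {X : Set α} (hX : #X ≤ #L) (hne : X.Nonempty) :
    ∃ f : L → α, Set.range f = X := by
  obtain ⟨g⟩ := (Cardinal.le_def _ _).1 hX
  classical
  refine ⟨fun l => if h : ∃ x : X, g x = l then (h.choose : α) else hne.some, ?_⟩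
  ext x
  constructor
  · rintro ⟨l, rfl⟩
    dsimp only
    split
    · rename_i h; exact h.choose.2
    · exact hne.some_mem
  · intro hx
    refine ⟨g ⟨x, hx⟩, ?_⟩
    have h : ∃ y : X, g y = g ⟨x, hx⟩ := ⟨⟨x, hx⟩, rfl⟩
    dsimp only
    rw [dif_pos h]
    have := g.injective h.choose_spec
    rw [this]

lemma exists_finset_image (f : L → α) (s : Finset α) (h : ↑s ⊆ Set.range f) :
    ∃ σ : Finset L, σ.image f = s := by
  classical
  have hch : ∀ x ∈ s, ∃ l, f l = x := fun x hx => h hx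
  refine ⟨s.attach.image fun x => (hch x.1 x.2).choose, ?_⟩
  rw [Finset.image_image]
  ext x
  simp only [Finset.mem_image, Finset.mem_attach, true_and, Subtype.exists,
    Function.comp_apply]
  constructor
  · rintro ⟨a, ha, rfl⟩
    rw [(hch a ha).choose_spec]; exact ha
  · intro hx
    exact ⟨x, hx, (hch x hx).choose_spec⟩

theorem step {α ι L Ω : Type u} [DecidableEq α] [LinearOrder Ω] [WellFoundedLT Ω]
    (lam μ : Cardinal.{u}) (hlam : ℵ₀ ≤ lam) (hμlam : μ ≤ lam)
    (hα : #α = succ (2 ^ lam)) (hι : #ι = μ) (hmkL : #L = lam)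
    (hmkΩ : #Ω = succ lam)
    (hIio : ∀ ξ : Ω, #(Set.Iio ξ) ≤ lam)
    (hbound : ∀ S : Set Ω, #S ≤ lam → ∃ ξ₀ : Ω, ∀ η ∈ S, η < ξ₀)
    (c : Finset α → ι) :
    ∃ e : Ω → α, Function.Injective e ∧
      ∃ d : Finset Ω → ι, ∀ (σ : Finset Ω) (ξ : Ω),
        (∀ η ∈ σ, η < ξ) → c (insert (e ξ) (σ.image e)) = d σ := by
  classical
  have h2 : ℵ₀ ≤ 2 ^ lam := hlam.trans (cantor lam).le
  have hslam : succ lam ≤ 2 ^ lam := Order.succ_le_of_lt (cantor lam)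
  have hαne : Nonempty α := by
    rw [← mk_ne_zero_iff, hα]
    exact ne_of_gt (lt_of_le_of_lt zero_le (lt_succ _))
  have hΩne : Nonempty Ω := by
    rw [← mk_ne_zero_iff, hmkΩ]
    exact ne_of_gt (lt_of_le_of_lt zero_le (lt_succ _))
  obtain ⟨a₀⟩ := hαne
  haveI : Infinite L := infinite_iff.2 (by rw [hmkL]; exact hlam)
  set C : Ω → Set α := chain L c a₀ with hC
  have hpow : ∀ γ : Cardinal, γ ≤ 2 ^ lam → γ ^ lam ≤ 2 ^ lam := fun γ hγ => by
    calc γ ^ lam ≤ (2 ^ lam) ^ lam := power_le_power_right hγ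
    _ = 2 ^ (lam * lam) := power_mul.symm
    _ = 2 ^ lam := by rw [mul_eq_self hlam]
  have honestep : ∀ D : Set α, #D ≤ 2 ^ lam → #(oneStep L c D) ≤ 2 ^ lam := by
    intro D hDle
    refine le_trans (mk_union_le _ _) (add_le_of_le h2 hDle ?_)
    refine le_trans mk_iUnion_le_sum_mk ?_
    refine le_trans (sum_le_sum _ (fun _ => 1) fun p => mk_witSet_le _ _ _) ?_
    rw [sum_const', mul_one]
    have h1 : #(L → ↥D) = (#↥D) ^ lam := by rw [← hmkL, power_def]
    have h2' : #(Finset L → ι) = μ ^ lam := by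
      have hfl : #(Finset L) = lam := by rw [mk_finset_of_infinite, hmkL]
      rw [← hι, ← hfl, power_def]
    rw [mk_prod, lift_id, lift_id, h1, h2']
    calc (#↥D) ^ lam * μ ^ lam ≤ 2 ^ lam * 2 ^ lam :=
          mul_le_mul' (hpow _ hDle) (hpow μ (hμlam.trans (cantor lam).le))
    _ = 2 ^ lam := mul_eq_self h2
  have hCcard : ∀ ξ : Ω, #(C ξ) ≤ 2 ^ lam := by
    intro ξ
    induction ξ using WellFoundedLT.induction with
    | ind ξ ih =>
      rw [hC, chain_eq]
      refine honestep _ ?_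
      refine le_trans (mk_union_le _ _) (add_le_of_le h2 ?_ ?_)
      · rw [mk_singleton]
        exact le_trans one_le_aleph0 h2
      · refine le_trans mk_iUnion_le_sum_mk ?_
        refine le_trans (sum_le_sum _ (fun _ => 2 ^ lam) fun η => ih η.1 η.2) ?_
        rw [sum_const']
        calc #(Set.Iio ξ) * 2 ^ lam ≤ 2 ^ lam * 2 ^ lam :=
              mul_le_mul' (le_trans (hIio ξ) ((cantor lam).le)) le_rfl
        _ = 2 ^ lam := mul_eq_self h2
  set B := ⋃ ξ : Ω, C ξ with hBdef
  have hB : #B ≤ 2 ^ lam := by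
    refine le_trans mk_iUnion_le_sum_mk ?_
    refine le_trans (sum_le_sum _ (fun _ => 2 ^ lam) fun ξ => hCcard ξ) ?_
    rw [sum_const', hmkΩ]
    calc succ lam * 2 ^ lam ≤ 2 ^ lam * 2 ^ lam := mul_le_mul' hslam le_rfl
    _ = 2 ^ lam := mul_eq_self h2
  have hex_a' : ∃ a', a' ∉ B := by
    by_contra h
    push_neg at h
    have huniv : B = Set.univ := Set.eq_univ_of_forall h
    rw [huniv, mk_univ, hα] at hB
    exact absurd hB (not_le.2 (lt_succ _))
  obtain ⟨a', ha'⟩ := hex_a'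
  have ha₀B : a₀ ∈ B := by
    obtain ⟨ζ⟩ := hΩne
    refine Set.mem_iUnion.2 ⟨ζ, ?_⟩
    rw [hC, chain_eq]
    exact subset_oneStep _ _ _ (Set.mem_union_left _ rfl)
  -- the closure property of B
  have clo : ∀ X : Set α, X ⊆ B → #X ≤ lam → ∀ a : α, a ∉ B →
      ∃ b, b ∈ B ∧ b ∉ X ∧ ∀ s : Finset α, ↑s ⊆ X →
        c (insert b s) = c (insert a s) := by
    intro X hXB hXcard a haB
    have hbd : ∃ ξ₀ : Ω, insert a₀ X ⊆ ({a₀} ∪ ⋃ η : Set.Iio ξ₀, C η.1) := by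
      have hx : ∀ x : X, ∃ ξ : Ω, x.1 ∈ C ξ := fun x => Set.mem_iUnion.1 (hXB x.2)
      obtain ⟨ξ₀, hξ₀⟩ := hbound (Set.range fun x : X => (hx x).choose)
        (le_trans mk_range_le hXcard)
      refine ⟨ξ₀, ?_⟩
      rintro x hx'
      rcases Set.mem_insert_iff.1 hx' with rfl | hxX
      · exact Set.mem_union_left _ rfl
      · refine Set.mem_union_right _ (Set.mem_iUnion.2
          ⟨⟨_, hξ₀ _ (Set.mem_range_self (⟨x, hxX⟩ : X))⟩, (hx ⟨x, hxX⟩).choose_spec⟩)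
    obtain ⟨ξ₀, hξ₀⟩ := hbd
    have hX'card : #(insert a₀ X : Set α) ≤ lam := by
      refine le_trans mk_insert_le ?_
      calc #X + 1 ≤ lam + 1 := add_le_add hXcard le_rfl
      _ = lam := add_one_eq hlam
    obtain ⟨f, hf⟩ := exists_range_eq (L := L) (X := insert a₀ X)
      (by rw [hmkL]; exact hX'card) ⟨a₀, Set.mem_insert _ _⟩
    have haf : a ∉ Set.range f := by
      rw [hf]
      intro h
      rcases Set.mem_insert_iff.1 h with rfl | hX
      · exact haB ha₀B
      · exact haB (hXB hX)
    have hex : ∃ b, Realizes c f (fun σ => c (insert a (σ.image f))) b :=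
      ⟨a, haf, fun σ => rfl⟩
    obtain ⟨b, hbwit, hbnr, hbreal⟩ := witSet_spec c f _ hex
    have hfD₀ : ∀ l, f l ∈ ({a₀} ∪ ⋃ η : Set.Iio ξ₀, C η.1 : Set α) := fun l =>
      hξ₀ (hf ▸ Set.mem_range_self l)
    have hbC : b ∈ C ξ₀ := by
      rw [hC, chain_eq]
      refine Set.mem_union_right _ (Set.mem_iUnion.2
        ⟨(fun l => ⟨f l, hfD₀ l⟩, fun σ => c (insert a (σ.image f))), ?_⟩)
      exact hbwit
    refine ⟨b, Set.mem_iUnion.2 ⟨ξ₀, hbC⟩, fun hbX => hbnr ?_, ?_⟩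
    · rw [hf]; exact Set.mem_insert_of_mem _ hbX
    · intro s hs
      have hsr : ↑s ⊆ Set.range f := by
        rw [hf]; exact hs.trans (Set.subset_insert _ _)
      obtain ⟨σ, hσ⟩ := exists_finset_image f s hsr
      rw [← hσ, hbreal σ]
  -- the extraction sequence
  set e : Ω → α := seq c B a' with he
  have good : ∀ ξ : Ω, e ξ ∈ B ∧ e ξ ∉ e '' Set.Iio ξ ∧
      ∀ s : Finset α, ↑s ⊆ e '' Set.Iio ξ →
        c (insert (e ξ) s) = c (insert a' s) := by
    intro ξ
    induction ξ using WellFoundedLT.induction with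
    | ind ξ ih =>
      have hXB : e '' Set.Iio ξ ⊆ B := by
        rintro _ ⟨η, hη, rfl⟩
        exact (ih η hη).1
      have hXcard : #(e '' Set.Iio ξ) ≤ lam := le_trans mk_image_le (hIio ξ)
      have hex := clo _ hXB hXcard a' ha'
      rw [he, seq_eq]
      exact pick_spec c B a' _ hex
  have einj : Function.Injective e := by
    intro ξ η henq
    by_contra hne
    rcases lt_or_gt_of_ne hne with h | h
    · exact (good η).2.1 ⟨ξ, h, henq⟩
    · exact (good ξ).2.1 ⟨η, h, henq.symm⟩
  have hub : ∀ σ : Finset Ω, ∃ ξ : Ω, ∀ η ∈ σ, η < ξ := by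
    intro σ
    obtain ⟨ξ₀, hξ₀⟩ := hbound ↑σ
      (le_trans (le_of_lt σ.finite_toSet.lt_aleph0) hlam)
    exact ⟨ξ₀, fun η hη => hξ₀ η hη⟩
  choose ub hubs using hub
  have key : ∀ (σ : Finset Ω) (ζ : Ω), (∀ η ∈ σ, η < ζ) →
      c (insert (e ζ) (σ.image e)) = c (insert a' (σ.image e)) := by
    intro σ ζ hζ
    refine (good ζ).2.2 _ ?_
    rw [Finset.coe_image]
    exact Set.image_mono fun η hη => hζ η hη
  refine ⟨e, einj, fun σ => c (insert (e (ub σ)) (σ.image e)), ?_⟩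
  intro σ ξ hσξ
  rw [key σ ξ hσξ, ← key σ (ub σ) (hubs σ)]

end ERaux

universe v

lemma le_iterBeth (μ : Cardinal.{v}) (r : ℕ) : μ ≤ iterBeth μ r := by
  induction r with
  | zero => exact le_rfl
  | succ r ih => exact ih.trans (Cardinal.cantor _).le

theorem erdosRado_aux (r : ℕ) : ∀ μ : Cardinal.{v}, ℵ₀ ≤ μ →
    ∀ α ι : Type v, #α = succ (iterBeth μ r) → #ι = μ →
    ∀ c : Finset α → ι, ∃ H : Set α, #H = succ μ ∧
      ∀ s t : Finset α, s.card = r + 1 → t.card = r + 1 →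
        ↑s ⊆ H → ↑t ⊆ H → c s = c t := by
  induction r with
  | zero =>
    intro μ hμ α ι hα hι c
    classical
    have h0 : iterBeth μ 0 = μ := rfl
    rw [h0] at hα
    set g : α → ι := fun a => c {a} with hg
    have hsig : #α = Cardinal.sum fun i => #{a // g a = i} := by
      rw [← Cardinal.mk_sigma]
      exact (Cardinal.mk_congr (Equiv.sigmaFiberEquiv g)).symm
    have hfib : ∃ i, succ μ ≤ #{a // g a = i} := by
      by_contra h
      push_neg at h
      have hle : ∀ i, #{a // g a = i} ≤ μ := fun i => Order.lt_succ_iff.1 (h i)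
      have hcon : #α ≤ μ := by
        rw [hsig]
        refine le_trans (Cardinal.sum_le_sum _ (fun _ => μ) hle) ?_
        rw [Cardinal.sum_const', hι, Cardinal.mul_eq_self hμ]
      rw [hα] at hcon
      exact absurd hcon (not_le.2 (lt_succ μ))
    obtain ⟨i, hi⟩ := hfib
    obtain ⟨p, hp⟩ := Cardinal.le_mk_iff_exists_set.1 hi
    refine ⟨Subtype.val '' p, by rw [Cardinal.mk_image_eq Subtype.val_injective, hp], ?_⟩
    intro s t hs ht hsH htH
    obtain ⟨x, hx⟩ := Finset.card_eq_one.1 hs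
    obtain ⟨y, hy⟩ := Finset.card_eq_one.1 ht
    have hgx : g x = i := by
      have hxH := hsH (by rw [hx]; exact Finset.mem_singleton_self x)
      obtain ⟨⟨x', hx'⟩, _, rfl⟩ := hxH
      exact hx'
    have hgy : g y = i := by
      have hyH := htH (by rw [hy]; exact Finset.mem_singleton_self y)
      obtain ⟨⟨y', hy'⟩, _, rfl⟩ := hyH
      exact hy'
    rw [hx, hy]
    show g x = g y
    rw [hgx, hgy]
  | succ r IH =>
    intro μ hμ α ι hα hι c
    classical
    have hlam : ℵ₀ ≤ iterBeth μ r := hμ.trans (le_iterBeth μ r)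
    have hμlam : μ ≤ iterBeth μ r := le_iterBeth μ r
    have hα' : #α = succ (2 ^ iterBeth μ r) := hα
    have hIio : ∀ ξ : (Cardinal.ord (succ (iterBeth μ r))).ToType,
        #(Set.Iio ξ) ≤ iterBeth μ r := fun ξ =>
      Order.lt_succ_iff.1 (Cardinal.mk_Iio_ord_toType ξ)
    have hbound : ∀ S : Set ((Cardinal.ord (succ (iterBeth μ r))).ToType),
        Cardinal.mk S ≤ iterBeth μ r → ∃ ξ₀, ∀ η ∈ S, η < ξ₀ := by
      intro S hS
      haveI : IsWellOrder ((Cardinal.ord (succ (iterBeth μ r))).ToType) (· < ·) :=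
        ⟨⟩
      have hbdd : Set.Bounded (· < ·) S := by
        refine not_isCofinal_iff.1 fun hc => ?_
        have hcof := Order.cof_le hc
        rw [Ordinal.cof_toType, (Cardinal.isRegular_succ hlam).cof_eq] at hcof
        exact absurd (lt_of_le_of_lt hS (lt_succ _)) (not_lt.2 hcof)
      exact hbdd
    obtain ⟨e, einj, d, hd⟩ := ERaux.step (L := Quotient.out (iterBeth μ r))
      (iterBeth μ r) μ hlam hμlam hα' hι (Cardinal.mk_out _)
      (by rw [Cardinal.mk_toType, Cardinal.card_ord]) hIio hbound c
    obtain ⟨H', hH'card, hH'hom⟩ := IH μ hμ ((Cardinal.ord (succ (iterBeth μ r))).ToType) ι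
      (by rw [Cardinal.mk_toType, Cardinal.card_ord]) hι d
    refine ⟨e '' H', by rw [Cardinal.mk_image_eq einj]; exact hH'card, ?_⟩
    have conv : ∀ s : Finset α, s.card = r + 1 + 1 → ↑s ⊆ e '' H' →
        ∃ σ₀, σ₀.card = r + 1 ∧ ↑σ₀ ⊆ H' ∧ c s = d σ₀ := by
      intro s hs hsH
      have hinjOn : Set.InjOn e (e ⁻¹' ↑s) := einj.injOn
      set σ := s.preimage e hinjOn with hσdef
      have hσim : σ.image e = s := by
        rw [hσdef, Finset.image_preimage]
        refine Finset.filter_true_of_mem fun x hx => ?_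
        obtain ⟨y, _, rfl⟩ := hsH hx
        exact Set.mem_range_self y
      have hσsub : ↑σ ⊆ H' := by
        intro x hx
        have hxs : e x ∈ ↑s := Finset.mem_preimage.1 hx
        obtain ⟨y, hy, hxy⟩ := hsH hxs
        rwa [← einj hxy]
      have hσcard : σ.card = r + 1 + 1 := by
        have h1 : σ.card = s.card := by
          rw [← hσim, Finset.card_image_of_injective _ einj]
        rw [h1, hs]
      have hσne : σ.Nonempty := Finset.card_pos.1 (by rw [hσcard]; omega)
      refine ⟨σ.erase (σ.max' hσne), ?_, ?_, ?_⟩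
      · rw [Finset.card_erase_of_mem (σ.max'_mem hσne), hσcard]
        omega
      · exact fun x hx => hσsub (Finset.erase_subset _ _ hx)
      · have hins : c s = c (insert (e (σ.max' hσne))
            ((σ.erase (σ.max' hσne)).image e)) := by
          conv_lhs => rw [← hσim, ← Finset.insert_erase (σ.max'_mem hσne),
            Finset.image_insert]
        rw [hins]
        exact hd (σ.erase (σ.max' hσne)) (σ.max' hσne) fun η hη =>
          lt_of_le_of_ne (σ.le_max' η (Finset.mem_of_mem_erase hη))
            (Finset.ne_of_mem_erase hη)
    intro s t hs ht hsH htH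
    obtain ⟨σ₀, hσ₀c, hσ₀s, hcs⟩ := conv s hs hsH
    obtain ⟨τ₀, hτ₀c, hτ₀s, hct⟩ := conv t ht htH
    rw [hcs, hct]
    exact hH'hom σ₀ τ₀ hσ₀c hτ₀c hσ₀s hτ₀s

/-- Erdős–Rado theorem: `ℶ_r(μ)⁺ → (μ⁺)^{r+1}_μ` for every `r < ω` and every
infinite cardinal `μ`: every coloring of the `(r+1)`-element subsets of a set
of cardinality `ℶ_r(μ)⁺` with `μ` colors has a homogeneous set of cardinality `μ⁺`. -/
theorem erdos_rado.{u} (r : ℕ) (μ : Cardinal.{u}) (hμ : Cardinal.aleph0 ≤ μ)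
    (α ι : Type u) (hα : Cardinal.mk α = Order.succ (iterBeth μ r))
    (hι : Cardinal.mk ι = μ) (c : Finset α → ι) :
    ∃ H : Set α, Cardinal.mk H = Order.succ μ ∧
      ∀ s t : Finset α, s.card = r + 1 → t.card = r + 1 →
        ↑s ⊆ H → ↑t ⊆ H → c s = c t := by
  exact erdosRado_aux r μ hμ α ι hα hι c
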